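/- The squared ℓ² length function ‖·‖₂² : F_∞ → ℕ is a morphism on an arbitrarily large subset of F_∞: for every N ∈ ℕ and M ∈ ℕ and every choice of natural numbers s₁, …, s_M, there exist elements g_{n,k} ∈ F_∞ (for 1 ≤ n ≤ N and 1 ≤ k ≤ M) such that ‖g_{n,j}⁻¹ g_{m,k}‖₂² = s_j + s_k whenever n ≠ m. -/

import Mathlib

open ComplexOrder

/-- Sum of squared block lengths of a reduced word, given the generator of the
current block and its current length. Blocks are maximal runs of the same generator. -/
def blockSqSumAux {ι : Type*} [DecidableEq ι] (a : ι) (n : ℕ) :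
    List (ι × Bool) → ℕ
  | [] => n ^ 2
  | (b, _) :: l => if b = a then blockSqSumAux a (n + 1) l else n ^ 2 + blockSqSumAux b 1 l

/-- The squared ℓ² length of an element of a free group: for a reduced block form
`g = a₁^{k₁} ⋯ a_n^{k_n}` it equals `∑ i, k_i²`. -/
def l2sq {ι : Type*} [DecidableEq ι] (g : FreeGroup ι) : ℕ :=
  match FreeGroup.toWord g with
  | [] => 0
  | (a, _) :: l => blockSqSumAux a 1 l

lemma reduce_eq_self_of_chain {ι : Type*} [DecidableEq ι] :
    ∀ L : List (ι × Bool), List.Chain' (fun x y : ι × Bool => x.1 ≠ y.1) L →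
      FreeGroup.reduce L = L
  | [], _ => rfl
  | [x], _ => rfl
  | x :: y :: l, h => by
    have h' := h.tail
    have hxy : x.1 ≠ y.1 := List.isChain_cons_cons.1 h |>.1
    have ih := reduce_eq_self_of_chain (y :: l) h'
    rw [FreeGroup.reduce.cons, ih]
    simp [hxy]

lemma blockSqSumAux_of_chain {ι : Type*} [DecidableEq ι] :
    ∀ (L : List (ι × Bool)) (a : ι),
      List.Chain' (fun x y : ι × Bool => x.1 ≠ y.1) L →
      (∀ b ∈ L.head?, b.1 ≠ a) →
      blockSqSumAux a 1 L = 1 + L.length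
  | [], a, _, _ => by simp [blockSqSumAux]
  | (b, u) :: l, a, h, hh => by
    have hb : b ≠ a := hh (b, u) rfl
    have ih := blockSqSumAux_of_chain l b h.tail (by
      intro c hc
      rcases l with _ | ⟨d, l'⟩
      · simp at hc
      · simp at hc
        subst hc
        exact (List.isChain_cons_cons.1 h).1.symm)
    simp [blockSqSumAux, hb, ih]
    ring

lemma l2sq_mk_of_chain {ι : Type*} [DecidableEq ι] (L : List (ι × Bool))
    (h : List.Chain' (fun x y : ι × Bool => x.1 ≠ y.1) L) :
    l2sq (FreeGroup.mk L) = L.length := by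
  have ht : (FreeGroup.mk L).toWord = L := by
    rw [FreeGroup.toWord_mk, reduce_eq_self_of_chain L h]
  rcases L with _ | ⟨⟨a, u⟩, l⟩
  · simp [l2sq, ht]
  · rw [l2sq, ht]
    have := blockSqSumAux_of_chain l a h.tail (by
      intro c hc
      rcases l with _ | ⟨d, l'⟩
      · simp at hc
      · simp at hc; subst hc; exact (List.isChain_cons_cons.1 h).1.symm)
    simp [this, List.length_cons]
    ring

theorem l2sq_morphism_on_arbitrarily_large_subset :
    ∀ (N M : ℕ) (s : Fin M → ℕ),
      ∃ g : Fin N → Fin M → FreeGroup ℕ,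
        ∀ (n m : Fin N) (j k : Fin M),
          n ≠ m → l2sq ((g n j)⁻¹ * g m k) = s j + s k := by
  intro N M s
  refine ⟨fun n k => FreeGroup.mk ((List.range (s k)).map fun i => (Nat.pair n.1 i, true)),
    fun n m j k hnm => ?_⟩
  set W : Fin N → ℕ → List (ℕ × Bool) :=
    fun n t => (List.range t).map fun i => (Nat.pair n.1 i, true) with hW
  dsimp only
  rw [FreeGroup.inv_mk, FreeGroup.mul_mk]
  have hlen : (FreeGroup.invRev (W n (s j)) ++ W m (s k)).length = s j + s k := by
    simp [FreeGroup.invRev_length, hW]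
  rw [l2sq_mk_of_chain _ ?_, hlen]
  -- chain' via nodup of first components
  have hnodup : ((FreeGroup.invRev (W n (s j)) ++ W m (s k)).map Prod.fst).Nodup := by
    rw [List.map_append]
    have h1 : (FreeGroup.invRev (W n (s j))).map Prod.fst
        = ((List.range (s j)).map fun i => Nat.pair n.1 i).reverse := by
      simp [FreeGroup.invRev, hW, List.map_reverse, Function.comp_def]
    have h2 : (W m (s k)).map Prod.fst = (List.range (s k)).map fun i => Nat.pair m.1 i := by
      simp [hW, Function.comp_def]
    rw [h1, h2]
    refine List.Nodup.append ?_ ?_ ?_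
    · exact List.nodup_reverse.2 (List.Nodup.map (fun a b hab => (Nat.pair_eq_pair.1 hab).2) List.nodup_range)
    · exact List.Nodup.map (fun a b hab => (Nat.pair_eq_pair.1 hab).2) List.nodup_range
    · intro x hx hy
      simp at hx hy
      obtain ⟨i, _, hi⟩ := hx
      obtain ⟨i', _, hi'⟩ := hy
      rw [← hi'] at hi
      exact (Fin.val_ne_of_ne hnm) (Nat.pair_eq_pair.1 hi).1
  exact (List.isChain_map Prod.fst).1 (List.Pairwise.isChain hnodup)
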